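/- Let R be a CG-ring, K ≤ R^×, and let A = cyc(K, R) be the cyclotomic S-ring whose basic sets are the K-orbits on R. Then the S-ring dual to A equals cyc(K̂, R̂), where R̂ is the ring dual to R with respect to a generating character χ and K̂ is the image of K under the ring isomorphism r ↦ χ^{(r)} from R to R̂. -/

import Mathlib

open Pointwise

/-- A Galois ring: a finite commutative local ring whose radical is `pR` for a prime `p`. -/
def IsGaloisRing (R : Type*) [CommRing R] : Prop :=
  ∃ p : ℕ, p.Prime ∧ IsLocalRing R ∧ nilradical R = Ideal.span {(p : R)}

/-- A CG-ring: a finite commutative ring isomorphic to a product of Galois rings of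
pairwise coprime characteristics. -/
def IsCGRing (R : Type*) [CommRing R] : Prop :=
  ∃ (n : ℕ) (S : Fin n → Type) (instR : ∀ i, CommRing (S i)) (_ : ∀ i, Fintype (S i)),
    letI : ∀ i, CommRing (S i) := instR
    (∀ i, IsGaloisRing (S i)) ∧
    (∀ i j, i ≠ j → Nat.Coprime (ringChar (S i)) (ringChar (S j))) ∧
    Nonempty (R ≃+* ∀ i, S i)

/-- A nonempty subset `X` of a ring is pure if `X + I = X` forces `I = 0`. -/
def IsPureSet {R : Type*} [CommRing R] (X : Set R) : Prop :=
  ∀ I : Ideal R, X + (I : Set R) = X → I = ⊥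

/-- The partition of the additive character group dual to a family of subsets of `R`:
characters are equivalent iff they have equal sums over every member of the family. -/
noncomputable def addDualParts {R : Type*} [AddCommGroup R] (parts : Set (Set R)) :
    Set (Set (AddChar R ℂ)) :=
  Set.range (fun ψ₀ : AddChar R ℂ =>
    {ψ : AddChar R ℂ | ∀ S ∈ parts, (∑ᶠ s ∈ S, ψ s) = ∑ᶠ s ∈ S, ψ₀ s})

/-- The dual of the cyclotomic S-ring `cyc(K,R)` is `cyc(K̂,R̂)`: identifying the dual
ring `R̂` with `R` via a generating character `χ₀` (so that `r ↦ χ₀^{(r)} = mulShift χ₀ r`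
is a bijection), the basic sets of the dual S-ring are the images of the `K`-orbits. -/
theorem dual_of_cyclotomic {R : Type*} [CommRing R] [Fintype R]
    (hCG : IsCGRing R) (K : Subgroup Rˣ)
    (χ₀ : AddChar R ℂ) (hχ₀ : Function.Bijective (fun r : R => χ₀.mulShift r)) :
    addDualParts (Set.range (fun x : R => {y : R | ∃ k ∈ K, ((k : Rˣ) : R) * x = y})) =
      (fun X : Set R => (fun r : R => χ₀.mulShift r) '' X) ''
        (Set.range (fun x : R => {y : R | ∃ k ∈ K, ((k : Rˣ) : R) * x = y})) := by
  classical
  clear hCG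
  haveI : Fintype K := Fintype.ofFinite K
  have horbfin : ∀ x : R, ({y : R | ∃ k ∈ K, ((k : Rˣ) : R) * x = y}).Finite :=
    fun x => Set.toFinite _
  set T : R → Finset R := fun x => (horbfin x).toFinset with hTdef
  have hmemT : ∀ x y : R, y ∈ T x ↔ ∃ k ∈ K, ((k : Rˣ) : R) * x = y := by
    intro x y
    simp [hTdef, Set.Finite.mem_toFinset]
  have hprim : χ₀.IsPrimitive := by
    intro a ha h
    exact ha (hχ₀.injective (h.trans (AddChar.mulShift_zero χ₀).symm))
  -- L1: orbit sums are invariant under multiplying the shift by k ∈ K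
  have L1 : ∀ (k : K) (x a : R),
      (∑ s ∈ T x, χ₀ ((((k : Rˣ) : R) * a) * s)) = ∑ s ∈ T x, χ₀ (a * s) := by
    intro k x a
    refine Finset.sum_nbij' (fun s => (((k : Rˣ) : R)) * s)
      (fun s => ((((k⁻¹ : K) : Rˣ) : R)) * s) ?_ ?_ ?_ ?_ ?_
    · intro s hs
      rcases (hmemT x s).1 hs with ⟨k₂, hk₂, hk₂x⟩
      exact (hmemT x _).2 ⟨k * k₂, mul_mem k.2 hk₂, by
        push_cast
        rw [mul_assoc, hk₂x]⟩
    · intro s hs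
      rcases (hmemT x s).1 hs with ⟨k₂, hk₂, hk₂x⟩
      exact (hmemT x _).2 ⟨((k⁻¹ : K) : Rˣ) * k₂, mul_mem (inv_mem k.2) hk₂, by
        push_cast
        rw [mul_assoc, hk₂x]⟩
    · intro s _
      have h1 : (((k⁻¹ : K) : Rˣ) : R) * ((k : Rˣ) : R) = 1 := by
        rw [← Units.val_mul]
        norm_cast
        rw [inv_mul_cancel]
        simp
      beta_reduce
      rw [← mul_assoc, h1, one_mul]
    · intro s _
      have h1 : ((k : Rˣ) : R) * (((k⁻¹ : K) : Rˣ) : R) = 1 := by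
        rw [← Units.val_mul]
        norm_cast
        rw [mul_inv_cancel]
        simp
      beta_reduce
      rw [← mul_assoc, h1, one_mul]
    · intro s _
      ring_nf
  -- L2a: all fibers of k ↦ k • x over the orbit have the same cardinality
  have L2a : ∀ (x s : R), s ∈ T x →
      (Finset.univ.filter (fun k : K => ((k : Rˣ) : R) * x = s)).card =
      (Finset.univ.filter (fun k : K => ((k : Rˣ) : R) * x = x)).card := by
    intro x s hs
    rcases (hmemT x s).1 hs with ⟨k₀, hk₀, hk₀x⟩
    refine Finset.card_bij' (fun k _ => (⟨k₀, hk₀⟩ : K)⁻¹ * k)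
      (fun k _ => (⟨k₀, hk₀⟩ : K) * k) ?_ ?_ ?_ ?_
    · intro k hk
      rw [Finset.mem_filter] at hk ⊢
      refine ⟨Finset.mem_univ _, ?_⟩
      push_cast
      rw [mul_assoc, hk.2, ← hk₀x, ← mul_assoc, ← Units.val_mul, inv_mul_cancel,
        Units.val_one, one_mul]
    · intro k hk
      rw [Finset.mem_filter] at hk ⊢
      refine ⟨Finset.mem_univ _, ?_⟩
      push_cast
      rw [mul_assoc, hk.2, hk₀x]
    · intro k _
      beta_reduce
      rw [← mul_assoc, mul_inv_cancel, one_mul]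
    · intro k _
      beta_reduce
      rw [← mul_assoc, inv_mul_cancel, one_mul]
  -- L2: group sum equals stabilizer size times orbit sum
  have L2 : ∀ (x a : R),
      (∑ k : K, χ₀ (a * (((k : Rˣ) : R) * x))) =
      (Finset.univ.filter (fun k : K => ((k : Rˣ) : R) * x = x)).card •
        ∑ s ∈ T x, χ₀ (a * s) := by
    intro x a
    have himg : Finset.univ.image (fun k : K => ((k : Rˣ) : R) * x) = T x := by
      ext y
      simp only [Finset.mem_image, Finset.mem_univ, true_and, hmemT]
      constructor
      · rintro ⟨k, rfl⟩; exact ⟨k, k.2, rfl⟩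
      · rintro ⟨k, hk, rfl⟩; exact ⟨⟨k, hk⟩, rfl⟩
    rw [Finset.sum_comp (fun s => χ₀ (a * s)) (fun k : K => ((k : Rˣ) : R) * x), himg,
      Finset.smul_sum]
    refine Finset.sum_congr rfl ?_
    intro s hs
    rw [L2a x s hs]
  -- orthogonality
  have orth : ∀ b : R, (∑ x : R, χ₀ (b * x)) =
      if b = 0 then (Fintype.card R : ℂ) else 0 := by
    intro b
    have := AddChar.sum_mulShift (ψ := χ₀) b hprim
    simp_rw [mul_comm] at this ⊢
    exact_mod_cast this
  have hcardR : (Fintype.card R : ℂ) ≠ 0 := by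
    exact_mod_cast Fintype.card_ne_zero
  -- the crucial double-sum computation
  have Csum : ∀ a r' : R,
      (∑ x : R, (χ₀ (r' * x))⁻¹ * ∑ k : K, χ₀ (a * (((k : Rˣ) : R) * x))) =
      ((Finset.univ.filter (fun k : K => a * ((k : Rˣ) : R) = r')).card : ℂ) *
        (Fintype.card R : ℂ) := by
    intro a r'
    have hterm : ∀ (x : R) (k : K),
        (χ₀ (r' * x))⁻¹ * χ₀ (a * (((k : Rˣ) : R) * x)) =
        χ₀ ((a * ((k : Rˣ) : R) - r') * x) := by
      intro x k
      rw [eq_comm, show (a * ((k : Rˣ) : R) - r') * x =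
        a * (((k : Rˣ) : R) * x) + (-(r' * x)) by ring, AddChar.map_add_eq_mul,
        AddChar.map_neg_eq_inv, mul_comm]
    calc (∑ x : R, (χ₀ (r' * x))⁻¹ * ∑ k : K, χ₀ (a * (((k : Rˣ) : R) * x)))
        = ∑ x : R, ∑ k : K, χ₀ ((a * ((k : Rˣ) : R) - r') * x) := by
          refine Finset.sum_congr rfl fun x _ => ?_
          rw [Finset.mul_sum]
          exact Finset.sum_congr rfl fun k _ => hterm x k
      _ = ∑ k : K, ∑ x : R, χ₀ ((a * ((k : Rˣ) : R) - r') * x) := Finset.sum_comm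
      _ = ∑ k : K, if a * ((k : Rˣ) : R) - r' = 0 then (Fintype.card R : ℂ) else 0 := by
          exact Finset.sum_congr rfl fun k _ => orth _
      _ = ∑ k ∈ Finset.univ.filter (fun k : K => a * ((k : Rˣ) : R) = r'),
            (Fintype.card R : ℂ) := by
          rw [Finset.sum_filter]
          exact Finset.sum_congr rfl fun k _ => by rw [sub_eq_zero]
      _ = _ := by rw [Finset.sum_const, nsmul_eq_mul]
  -- L3: the core equivalence
  have L3 : ∀ r r' : R,
      (∀ x : R, (∑ s ∈ T x, χ₀ (r' * s)) = ∑ s ∈ T x, χ₀ (r * s)) ↔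
      (∃ k ∈ K, ((k : Rˣ) : R) * r = r') := by
    intro r r'
    constructor
    · intro H
      have Hgrp : ∀ x : R, (∑ k : K, χ₀ (r' * (((k : Rˣ) : R) * x))) =
          ∑ k : K, χ₀ (r * (((k : Rˣ) : R) * x)) := by
        intro x
        rw [L2, L2, H x]
      have := (Csum r' r').symm.trans
        ((Finset.sum_congr rfl fun x _ => by rw [Hgrp x]).trans (Csum r r'))
      have hcards : ((Finset.univ.filter (fun k : K => r' * ((k : Rˣ) : R) = r')).card : ℂ) =
          ((Finset.univ.filter (fun k : K => r * ((k : Rˣ) : R) = r')).card : ℂ) :=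
        mul_right_cancel₀ hcardR this
      have h1 : (1 : K) ∈ Finset.univ.filter (fun k : K => r' * ((k : Rˣ) : R) = r') := by
        simp
      have hpos : 0 < (Finset.univ.filter (fun k : K => r' * ((k : Rˣ) : R) = r')).card :=
        Finset.card_pos.2 ⟨_, h1⟩
      have : 0 < (Finset.univ.filter (fun k : K => r * ((k : Rˣ) : R) = r')).card := by
        have := hcards
        rw [Nat.cast_inj] at this
        omega
      obtain ⟨k, hk⟩ := Finset.card_pos.1 this
      rw [Finset.mem_filter] at hk
      exact ⟨k, k.2, by rw [mul_comm]; exact hk.2⟩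
    · rintro ⟨k, hk, rfl⟩
      intro x
      exact L1 ⟨k, hk⟩ x r
  -- translating to the statement about finsums
  have hfin : ∀ (a x : R),
      (∑ᶠ s ∈ {y : R | ∃ k ∈ K, ((k : Rˣ) : R) * x = y}, (χ₀.mulShift a) s) =
      ∑ s ∈ T x, χ₀ (a * s) := by
    intro a x
    rw [show {y : R | ∃ k ∈ K, ((k : Rˣ) : R) * x = y} = ((T x : Finset R) : Set R) by
      ext y; simp [hmemT], finsum_mem_coe_finset]
    exact Finset.sum_congr rfl fun s _ => by rw [AddChar.mulShift_apply]
  have key : ∀ r : R,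
      {ψ : AddChar R ℂ | ∀ S ∈ Set.range (fun x : R => {y : R | ∃ k ∈ K, ((k : Rˣ) : R) * x = y}),
        (∑ᶠ s ∈ S, ψ s) = ∑ᶠ s ∈ S, (χ₀.mulShift r) s} =
      (fun r : R => χ₀.mulShift r) '' {y : R | ∃ k ∈ K, ((k : Rˣ) : R) * r = y} := by
    intro r
    ext ψ
    obtain ⟨r', rfl⟩ := hχ₀.surjective ψ
    simp only [Set.mem_setOf_eq, Set.mem_range, forall_exists_index]
    constructor
    · intro H
      have H' : ∀ x : R, (∑ s ∈ T x, χ₀ (r' * s)) = ∑ s ∈ T x, χ₀ (r * s) := by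
        intro x
        have := H {y : R | ∃ k ∈ K, ((k : Rˣ) : R) * x = y} x rfl
        rwa [hfin, hfin] at this
      exact ⟨r', (L3 r r').1 H', rfl⟩
    · rintro ⟨y, hy, hψ⟩
      obtain rfl : y = r' := hχ₀.injective hψ
      intro S x hS
      subst hS
      rw [hfin, hfin]
      exact (L3 r _).2 hy x
  -- conclude
  ext X
  constructor
  · rintro ⟨ψ₀, rfl⟩
    obtain ⟨r, rfl⟩ := hχ₀.surjective ψ₀
    exact ⟨{y : R | ∃ k ∈ K, ((k : Rˣ) : R) * r = y}, ⟨r, rfl⟩, (key r).symm⟩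
  · rintro ⟨S, ⟨r, rfl⟩, rfl⟩
    exact ⟨χ₀.mulShift r, key r⟩
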